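/- Let G be a group in which every maximal subgroup is normal, and suppose d(G) = 2 (G is generated by two elements but not by one). Then G is almost 3/2-generated: for every g ∈ G such that the coset gG' is part of a generating pair of G/G' (i.e., there exists ȳ ∈ G/G' with ⟨gG', ȳ⟩ = G/G'), there exists h ∈ G with ⟨g, h⟩ = G. -/

import Mathlib

/-- In a finitely generated group, the subgroup lattice is coatomic. -/
lemma fg_isCoatomic {G : Type*} [Group G] (hFG : Group.FG G) :
    IsCoatomic (Subgroup G) := by
  obtain ⟨S, hS⟩ := hFG.1
  apply IsCoatomic.of_isChain_bounded
  intro c hc hne htop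
  refine ⟨sSup c, ?_, fun x hx => le_sSup hx⟩
  intro hsup
  have hdir : DirectedOn (· ≤ ·) c := hc.directedOn
  -- every generator lies in some member of the chain; a finite set of them lies in one member
  have hall : ∀ T : Finset G, ∃ K ∈ c, (T : Set G) ⊆ K := by
    classical
    intro T
    induction T using Finset.induction with
    | empty => obtain ⟨K, hK⟩ := hne; exact ⟨K, hK, by simp⟩
    | @insert a s ha ih =>
      obtain ⟨K, hKc, hKs⟩ := ih
      have : a ∈ sSup c := hsup ▸ Subgroup.mem_top a
      obtain ⟨L, hLc, hLa⟩ := (Subgroup.mem_sSup_of_directedOn hne hdir).mp this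
      obtain ⟨N, hNc, hKN, hLN⟩ := hdir K hKc L hLc
      exact ⟨N, hNc, by
        intro z hz
        rcases Finset.mem_insert.mp (by exact_mod_cast hz) with rfl | hz'
        · exact hLN hLa
        · exact hKN (hKs hz')⟩
  obtain ⟨K, hKc, hKS⟩ := hall S
  have : K = ⊤ := top_unique (hS ▸ (Subgroup.closure_le K).mpr hKS)
  exact htop (this ▸ hKc)

/-- A normal coatom contains the commutator subgroup. -/
lemma commutator_le_coatom {G : Type*} [Group G] {M : Subgroup G}
    (hM : IsCoatom M) (hN : M.Normal) : commutator G ≤ M := by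
  rw [commutator_def, Subgroup.commutator_le]
  intro a _ b _
  -- work in the quotient G ⧸ M
  let π := QuotientGroup.mk' M
  have hsurj : Function.Surjective π := QuotientGroup.mk'_surjective M
  have hsub : ∀ H : Subgroup (G ⧸ M), H = ⊥ ∨ H = ⊤ := by
    intro H
    have hker : M ≤ H.comap π := by
      intro m hm
      have : π m = 1 := (QuotientGroup.eq_one_iff m).mpr hm
      simp only [Subgroup.mem_comap, this]
      exact H.one_mem
    rcases eq_or_lt_of_le hker with heq | hlt
    · left
      have := Subgroup.map_comap_eq_self_of_surjective hsurj (H := H)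
      rw [← this, ← heq]
      ext z
      simp only [Subgroup.mem_map, Subgroup.mem_bot]
      constructor
      · rintro ⟨m, hm, rfl⟩
        exact (QuotientGroup.eq_one_iff m).mpr hm
      · rintro rfl
        exact ⟨1, M.one_mem, map_one π⟩
    · right
      have := hM.2 _ hlt
      have h2 := Subgroup.map_comap_eq_self_of_surjective hsurj (H := H)
      rw [← h2, this]
      exact Subgroup.map_top_of_surjective π hsurj
  have hcomm : ∀ x y : G ⧸ M, Commute x y := by
    intro x y
    rcases hsub (Subgroup.zpowers x) with hbot | htop
    · have : x = 1 := by
        have : x ∈ Subgroup.zpowers x := Subgroup.mem_zpowers x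
        rwa [hbot, Subgroup.mem_bot] at this
      rw [this]; exact Commute.one_left y
    · have : y ∈ Subgroup.zpowers x := htop ▸ Subgroup.mem_top y
      obtain ⟨n, rfl⟩ := this
      exact (Commute.refl x).zpow_right n
  open scoped commutatorElement in
  have : π ⁅a, b⁆ = 1 := by
    rw [map_commutatorElement]
    exact (commutatorElement_eq_one_iff_commute).mpr (hcomm (π a) (π b))
  exact (QuotientGroup.eq_one_iff _).mp this

lemma ker_abelianization_of {G : Type*} [Group G] :
    (Abelianization.of : G →* Abelianization G).ker = commutator G := by
  ext x
  exact QuotientGroup.eq_one_iff x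

theorem almost_three_halves_generated
    {G : Type*} [Group G]
    (hMN : ∀ M : Subgroup G, IsCoatom M → M.Normal)
    (h2 : ∃ x y : G, Subgroup.closure ({x, y} : Set G) = ⊤)
    (hnc : ¬ ∃ x : G, Subgroup.closure ({x} : Set G) = ⊤)
    (g : G)
    (hg : ∃ ybar : Abelianization G,
      Subgroup.closure ({Abelianization.of g, ybar} : Set (Abelianization G)) = ⊤) :
    ∃ h : G, Subgroup.closure ({g, h} : Set G) = ⊤ := by
  obtain ⟨x, y, hxy⟩ := h2
  have hFG : Group.FG G := Group.fg_iff.mpr ⟨{x, y}, hxy, Set.toFinite _⟩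
  have hcoat := fg_isCoatomic hFG
  obtain ⟨ybar, hybar⟩ := hg
  obtain ⟨y', rfl⟩ : ∃ y' : G, Abelianization.of y' = ybar := by
    exact ⟨Quotient.out ybar, Quotient.out_eq ybar⟩
  refine ⟨y', ?_⟩
  set H := Subgroup.closure ({g, y'} : Set G) with hH
  rcases hcoat.eq_top_or_exists_le_coatom H with h | ⟨M, hM, hle⟩
  · exact h
  · exfalso
    have hnorm := hMN M hM
    have hcomm : commutator G ≤ M := commutator_le_coatom hM hnorm
    -- the image of H in the abelianization is everything
    have hmap : Subgroup.map (Abelianization.of : G →* Abelianization G) H = ⊤ := by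
      rw [hH, MonoidHom.map_closure]
      convert hybar using 2
      simp [Set.image_insert_eq]
    have htop : H ⊔ (Abelianization.of : G →* Abelianization G).ker = ⊤ := by
      rw [← Subgroup.comap_map_eq, hmap, Subgroup.comap_top]
    rw [ker_abelianization_of] at htop
    have : (⊤ : Subgroup G) ≤ M := htop ▸ sup_le hle hcomm
    exact hM.1 (top_unique this)
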